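/- If a synchronous algebra morphism φ: Sync(Σ) → A recognizes a relation R, then its consolidation φ₁: (Σ₂⊥)* → A₁ (a monoid morphism into the consolidated monoid, sending non-well-formed words to 0) recognizes R viewed as a language over Σ₂⊥. -/

import Mathlib

/-- Letter-types: `l` for a pair of proper letters, `p` for (letter, padding),
`q` for (padding, letter). -/
inductive LTy | l | p | q
deriving DecidableEq

/-- The five types of (well-formed) synchronous words:
`ll`, `ll→lb` (= `lllb`), `lb`, `ll→bl` (= `llbl`), `bl`. -/
inductive STy | ll | lllb | lb | llbl | bl
deriving DecidableEq

namespace STy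

/-- Letter-type of the first letter. -/
def src : STy → LTy
  | ll => .l | lllb => .l | lb => .p | llbl => .l | bl => .q

/-- Letter-type of the last letter. -/
def tgt : STy → LTy
  | ll => .l | lllb => .p | lb => .p | llbl => .q | bl => .q

/-- `σ = α→β` is compatible with `τ = β'→γ` iff `β = β'` or `β = ll`. -/
def compat (σ τ : STy) : Prop := σ.tgt = τ.src ∨ σ.tgt = LTy.l

/-- Product of compatible types (junk on incompatible pairs). -/
def comp : STy → STy → STy
  | ll, ll => ll
  | ll, lllb => lllb
  | ll, lb => lllb
  | ll, llbl => llbl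
  | ll, bl => llbl
  | lllb, _ => lllb
  | lb, _ => lb
  | llbl, _ => llbl
  | bl, _ => bl

end STy

/-- A synchronous algebra: a `STy`-typed set with a dependency relation and a
partial associative product defined exactly on compatible pairs, monotone with
respect to dependency, with units.  The partial product is modelled as an
`Option`-valued total product. -/
structure SyncAlg where
  A : Type
  ty : A → STy
  dep : A → A → Prop
  mul : A → A → Option A
  dep_refl : ∀ x, dep x x
  dep_symm : ∀ {x y}, dep x y → dep y x
  dep_eq : ∀ {x y}, dep x y → ty x = ty y → x = y
  mul_defined : ∀ x y, (mul x y).isSome ↔ (ty x).compat (ty y)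
  ty_mul : ∀ {x y z}, mul x y = some z → ty z = (ty x).comp (ty y)
  mul_assoc : ∀ x y z,
    (mul x y).bind (fun a => mul a z) = (mul y z).bind (fun b => mul x b)
  dep_mul_left : ∀ {x x' y z z'}, dep x x' →
    mul x y = some z → mul x' y = some z' → dep z z'
  dep_mul_right : ∀ {x x' y z z'}, dep x x' →
    mul y x = some z → mul y x' = some z' → dep z z'
  unit : STy → A
  ty_unit : ∀ τ, ty (unit τ) = τ
  unit_mul : ∀ {τ x z}, mul (unit τ) x = some z → dep z x
  mul_unit : ∀ {τ x z}, mul x (unit τ) = some z → dep z x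
  unit_lllb : mul (unit .ll) (unit .lb) = some (unit .lllb)
  unit_llbl : mul (unit .ll) (unit .bl) = some (unit .llbl)

namespace SyncAlg

/-- A closed subset of a synchronous algebra: saturated under dependency. -/
def Closed (S : SyncAlg) (C : Set S.A) : Prop :=
  ∀ {x y : S.A}, S.dep x y → (x ∈ C ↔ y ∈ C)

/-- Two-sided partial product `x·a·y`. -/
def mul3 (S : SyncAlg) (x a y : S.A) : Option S.A :=
  (S.mul x a).bind fun u => S.mul u y

/-- The syntactic congruence of a subset `C` of a synchronous algebra. -/
def synCong (S : SyncAlg) (C : Set S.A) (a b : S.A) : Prop :=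
  (∀ x y u v, S.mul3 x a y = some u → S.mul3 x b y = some v → (u ∈ C ↔ v ∈ C)) ∧
  (∀ x u v, S.mul x a = some u → S.mul x b = some v → (u ∈ C ↔ v ∈ C)) ∧
  (∀ y u v, S.mul a y = some u → S.mul b y = some v → (u ∈ C ↔ v ∈ C))

/-- Left residual `x⁻¹C` of a closed subset `C` by an element `x`. -/
def lres (S : SyncAlg) (x : S.A) (C : Set S.A) : Set S.A :=
  { y | ∃ y' u, S.synCong C y' y ∧ S.mul x y' = some u ∧ u ∈ C }

/-- Right residual `C·x⁻¹` of a closed subset `C` by an element `x`. -/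
def rres (S : SyncAlg) (x : S.A) (C : Set S.A) : Set S.A :=
  { y | ∃ y' u, S.synCong C y' y ∧ S.mul y' x = some u ∧ u ∈ C }

end SyncAlg

/-- Morphisms of synchronous algebras: preserve types, units, product and
dependency. -/
structure SyncHom (S T : SyncAlg) where
  toFun : S.A → T.A
  map_ty : ∀ x, T.ty (toFun x) = S.ty x
  map_unit : ∀ τ, toFun (S.unit τ) = T.unit τ
  map_mul : ∀ {x y z}, S.mul x y = some z →
    T.mul (toFun x) (toFun y) = some (toFun z)
  map_dep : ∀ {x y}, S.dep x y → T.dep (toFun x) (toFun y)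
/-- Synchronous words over an alphabet `α`, organized by their five types. -/
inductive SyncW (α : Type) : Type
  | wll : List (α × α) → SyncW α
  | wlllb : List (α × α) → List α → SyncW α
  | wlb : List α → SyncW α
  | wllbl : List (α × α) → List α → SyncW α
  | wbl : List α → SyncW α

namespace SyncW

variable {α : Type}

/-- The type of a synchronous word. -/
def ty : SyncW α → STy
  | wll _ => .ll | wlllb _ _ => .lllb | wlb _ => .lb | wllbl _ _ => .llbl | wbl _ => .bl

/-- Base identifications of the dependency relation on synchronous words. -/
inductive dep0 : SyncW α → SyncW α → Prop
  | ll_lllb (w : List (α × α)) : dep0 (wll w) (wlllb w [])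
  | ll_llbl (w : List (α × α)) : dep0 (wll w) (wllbl w [])
  | lb_lllb (s : List α) : dep0 (wlb s) (wlllb [] s)
  | bl_llbl (s : List α) : dep0 (wbl s) (wllbl [] s)

/-- The dependency relation: reflexive-symmetric closure of `dep0`. -/
def dep (x y : SyncW α) : Prop := x = y ∨ dep0 x y ∨ dep0 y x

/-- Concatenation of synchronous words (partial). -/
def mul : SyncW α → SyncW α → Option (SyncW α)
  | wll w, wll w' => some (wll (w ++ w'))
  | wll w, wlllb w' s => some (wlllb (w ++ w') s)
  | wll w, wlb s => some (wlllb w s)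
  | wll w, wllbl w' s => some (wllbl (w ++ w') s)
  | wll w, wbl s => some (wllbl w s)
  | wlllb w s, wlb s' => some (wlllb w (s ++ s'))
  | wlb s, wlb s' => some (wlb (s ++ s'))
  | wllbl w s, wbl s' => some (wllbl w (s ++ s'))
  | wbl s, wbl s' => some (wbl (s ++ s'))
  | _, _ => none

/-- Decoding into the pair of words represented. -/
def decode : SyncW α → List α × List α
  | wll w => (w.map Prod.fst, w.map Prod.snd)
  | wlllb w s => (w.map Prod.fst ++ s, w.map Prod.snd)
  | wlb s => (s, [])
  | wllbl w s => (w.map Prod.fst, w.map Prod.snd ++ s)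
  | wbl s => ([], s)

end SyncW

set_option maxHeartbeats 2000000 in
/-- The free synchronous algebra `Sync(α)` of synchronous words over `α`. -/
def freeSync (α : Type) : SyncAlg where
  A := SyncW α
  ty := SyncW.ty
  dep := SyncW.dep
  mul := SyncW.mul
  dep_refl x := Or.inl rfl
  dep_symm h := by
    rcases h with rfl | h | h
    · exact Or.inl rfl
    · exact Or.inr (Or.inr h)
    · exact Or.inr (Or.inl h)
  dep_eq := by
    rintro x y (rfl | h | h) hty <;> first
      | rfl
      | (cases h <;> simp [SyncW.ty] at hty)
  mul_defined x y := by
    cases x <;> cases y <;>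
      simp [SyncW.mul, SyncW.ty, STy.compat, STy.tgt, STy.src]
  ty_mul := by
    intro x y z h
    cases x <;> cases y <;>
      simp [SyncW.mul] at h <;> subst h <;> rfl
  mul_assoc x y z := by
    cases x <;> cases y <;> cases z <;>
      simp [SyncW.mul, List.append_assoc]
  dep_mul_left := by
    intro x x' y z z' h h1 h2
    rcases h with rfl | h | h
    · rw [h1] at h2; injection h2 with h2; rw [h2]; exact Or.inl rfl
    · cases h <;> cases y <;>
        simp [SyncW.mul] at h1 h2 <;> subst h1 <;> subst h2 <;>
        first
          | exact Or.inl rfl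
          | exact Or.inr (Or.inl (by constructor))
          | exact Or.inr (Or.inr (by constructor))
    · cases h <;> cases y <;>
        simp [SyncW.mul] at h1 h2 <;> subst h1 <;> subst h2 <;>
        first
          | exact Or.inl rfl
          | exact Or.inr (Or.inl (by constructor))
          | exact Or.inr (Or.inr (by constructor))
  dep_mul_right := by
    intro x x' y z z' h h1 h2
    rcases h with rfl | h | h
    · rw [h1] at h2; injection h2 with h2; rw [h2]; exact Or.inl rfl
    · cases h <;> cases y <;>
        simp [SyncW.mul] at h1 h2 <;> subst h1 <;> subst h2 <;>
        first
          | exact Or.inl rfl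
          | exact Or.inr (Or.inl (by constructor))
          | exact Or.inr (Or.inr (by constructor))
    · cases h <;> cases y <;>
        simp [SyncW.mul] at h1 h2 <;> subst h1 <;> subst h2 <;>
        first
          | exact Or.inl rfl
          | exact Or.inr (Or.inl (by constructor))
          | exact Or.inr (Or.inr (by constructor))
  unit := fun τ => match τ with
    | .ll => .wll []
    | .lllb => .wlllb [] []
    | .lb => .wlb []
    | .llbl => .wllbl [] []
    | .bl => .wbl []
  ty_unit τ := by cases τ <;> rfl
  unit_mul := by
    intro τ x z h
    cases τ <;> cases x <;> simp [SyncW.mul] at h <;> subst h <;>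
      first
        | exact Or.inl rfl
        | exact Or.inr (Or.inl (by constructor))
        | exact Or.inr (Or.inr (by constructor))
  mul_unit := by
    intro τ x z h
    cases τ <;> cases x <;> simp [SyncW.mul] at h <;> subst h <;>
      first
        | exact Or.inl rfl
        | exact Or.inr (Or.inl (by constructor))
        | exact Or.inr (Or.inr (by constructor))
  unit_lllb := rfl
  unit_llbl := rfl

/-- The closed subset of `Sync(α)` induced by a relation `R ⊆ α* × α*`. -/
def projS {α : Type} (R : Set (List α × List α)) : Set (SyncW α) :=
  { x | x.decode ∈ R }

/-- `⟨φ, B, Acc⟩` recognizes the relation `R` when `Acc` is closed and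
`proj R = φ⁻¹[Acc]`. -/
def RecognizesRel {α : Type} (B : SyncAlg) (φ : SyncHom (freeSync α) B)
    (Acc : Set B.A) (R : Set (List α × List α)) : Prop :=
  B.Closed Acc ∧ projS R = φ.toFun ⁻¹' Acc

/-- The paired alphabet `Σ₂⊥ = (Σ×Σ) ⊕ (Σ×{⊥}) ⊕ ({⊥}×Σ)`. -/
def PL (α : Type) : Type := (α × α) ⊕ α ⊕ α

/-- A word over `Σ₂⊥` is well-formed when padding symbols are placed
consistently: a block of letter-pairs followed by a block of padded letters on
a single side. -/
def WF {α : Type} (l : List (PL α)) : Prop :=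
  ∃ (w : List (α × α)) (s : List α),
    l = w.map Sum.inl ++ s.map (fun a => Sum.inr (Sum.inl a)) ∨
    l = w.map Sum.inl ++ s.map (fun a => Sum.inr (Sum.inr a))

/-- Decode a word over `Σ₂⊥` into the pair of words it represents
(stripping padding symbols). -/
def decodeW {α : Type} (l : List (PL α)) : List α × List α :=
  (l.filterMap (fun x => match x with
      | Sum.inl p => some p.1
      | Sum.inr (Sum.inl a) => some a
      | Sum.inr (Sum.inr _) => none),
   l.filterMap (fun x => match x with
      | Sum.inl p => some p.2
      | Sum.inr (Sum.inl _) => none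
      | Sum.inr (Sum.inr a) => some a))

/-- The language over `Σ₂⊥` corresponding to a relation `R ⊆ α* × α*`:
well-formed words whose decoded pair lies in `R`. -/
def langOf {α : Type} (R : Set (List α × List α)) : Language (PL α) :=
  { l | WF l ∧ decodeW l ∈ R }

instance {α : Type} [DecidableEq α] : DecidableEq (PL α) :=
  inferInstanceAs (DecidableEq ((α × α) ⊕ α ⊕ α))

/-- Parse a word over `Σ₂⊥` into a synchronous word (with the canonical type
assignment of the consolidation: `(Σ×Σ)* ↦ ll`, `(Σ×⊥)⁺ ↦ lb`,
`(Σ×Σ)⁺(Σ×⊥)⁺ ↦ ll→lb`, and symmetrically), or `none` (the zero of the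
consolidated monoid) if the word is not well-formed. -/
def toSyncW? {α : Type} [DecidableEq α] (l : List (PL α)) : Option (SyncW α) :=
  let w : List (α × α) := l.filterMap (fun x => match x with
    | Sum.inl p => some p | _ => none)
  let s₁ : List α := l.filterMap (fun x => match x with
    | Sum.inr (Sum.inl a) => some a | _ => none)
  let s₂ : List α := l.filterMap (fun x => match x with
    | Sum.inr (Sum.inr a) => some a | _ => none)
  if l = w.map Sum.inl ++ s₁.map (fun a => Sum.inr (Sum.inl a)) then
    (if s₁ = [] then some (.wll w)
     else if w = [] then some (.wlb s₁) else some (.wlllb w s₁))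
  else if l = w.map Sum.inl ++ s₂.map (fun a => Sum.inr (Sum.inr a)) then
    (if w = [] then some (.wbl s₂) else some (.wllbl w s₂))
  else none

/-- The consolidation `φ₁ : (Σ₂⊥)* → A₁` of a synchronous algebra morphism
`φ : Sync(Σ) → A`: it sends non-well-formed words to the adjoined zero
(modelled by `none`) and a well-formed word to the image of the corresponding
synchronous word. -/
def consol {α : Type} [DecidableEq α] {B : SyncAlg}
    (φ : SyncHom (freeSync α) B) (l : List (PL α)) : Option B.A :=
  (toSyncW? l).map φ.toFun

section Aux
variable {α : Type} [DecidableEq α]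

lemma fm_some' {β γ : Type} (f : β → γ) (l : List β) :
    l.filterMap (fun x => some (f x)) = l.map f := by
  induction l <;> simp [*]

lemma fm_id' {β : Type} (l : List β) :
    l.filterMap (fun x => some x) = l := by
  induction l <;> simp [*]

lemma fm_none' {β γ : Type} (l : List β) :
    l.filterMap (fun _ => (none : Option γ)) = [] := by
  induction l <;> simp [*]

abbrev PLS (α : Type) : Type := (α × α) ⊕ α ⊕ α

lemma decodeW_def' (l : List (PLS α)) : decodeW l =
    (l.filterMap (fun x => match x with
      | Sum.inl p => some p.1
      | Sum.inr (Sum.inl a) => some a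
      | Sum.inr (Sum.inr _) => none),
     l.filterMap (fun x => match x with
      | Sum.inl p => some p.2
      | Sum.inr (Sum.inl _) => none
      | Sum.inr (Sum.inr a) => some a)) := rfl

lemma toSyncW?_def' (l : List (PLS α)) : toSyncW? l =
    (let w : List (α × α) := l.filterMap (fun x => match x with
      | Sum.inl p => some p | _ => none)
    let s₁ : List α := l.filterMap (fun x => match x with
      | Sum.inr (Sum.inl a) => some a | _ => none)
    let s₂ : List α := l.filterMap (fun x => match x with
      | Sum.inr (Sum.inr a) => some a | _ => none)
    if l = w.map Sum.inl ++ s₁.map (fun a => Sum.inr (Sum.inl a)) then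
      (if s₁ = [] then some (.wll w)
       else if w = [] then some (.wlb s₁) else some (.wlllb w s₁))
    else if l = w.map Sum.inl ++ s₂.map (fun a => Sum.inr (Sum.inr a)) then
      (if w = [] then some (.wbl s₂) else some (.wllbl w s₂))
    else none) := rfl

lemma decodeW_left (w : List (α × α)) (s : List α) :
    decodeW (w.map Sum.inl ++ s.map (fun a => Sum.inr (Sum.inl a)) : List (PL α)) =
      (w.map Prod.fst ++ s, w.map Prod.snd) := by
  rw [show (w.map Sum.inl ++ s.map (fun a => Sum.inr (Sum.inl a)) : List (PL α)) = ((w.map Sum.inl ++ s.map (fun a => Sum.inr (Sum.inl a)) : List (PLS α))) from rfl, decodeW_def']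
  simp [List.filterMap_append, List.filterMap_map, Function.comp_def, fm_some', fm_none', fm_id']

lemma decodeW_right (w : List (α × α)) (s : List α) :
    decodeW (w.map Sum.inl ++ s.map (fun a => Sum.inr (Sum.inr a)) : List (PL α)) =
      (w.map Prod.fst, w.map Prod.snd ++ s) := by
  rw [show (w.map Sum.inl ++ s.map (fun a => Sum.inr (Sum.inr a)) : List (PL α)) = ((w.map Sum.inl ++ s.map (fun a => Sum.inr (Sum.inr a)) : List (PLS α))) from rfl, decodeW_def']
  simp [List.filterMap_append, List.filterMap_map, Function.comp_def, fm_some', fm_none', fm_id']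

lemma toSyncW?_left (w : List (α × α)) (s : List α) :
    toSyncW? (w.map Sum.inl ++ s.map (fun a => Sum.inr (Sum.inl a)) : List (PL α)) =
      some (if s = [] then .wll w else if w = [] then .wlb s else .wlllb w s) := by
  rw [show (w.map Sum.inl ++ s.map (fun a => Sum.inr (Sum.inl a)) : List (PL α)) = ((w.map Sum.inl ++ s.map (fun a => Sum.inr (Sum.inl a)) : List (PLS α))) from rfl, toSyncW?_def']
  simp only [List.filterMap_append, List.filterMap_map, Function.comp_def, fm_some', fm_none', fm_id']
  simp only [List.append_nil, List.nil_append, List.map_nil, if_pos rfl]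
  split_ifs <;> rfl

lemma toSyncW?_right (w : List (α × α)) (s : List α) :
    toSyncW? (w.map Sum.inl ++ s.map (fun a => Sum.inr (Sum.inr a)) : List (PL α)) =
      some (if s = [] then .wll w else if w = [] then .wbl s else .wllbl w s) := by
  rw [show (w.map Sum.inl ++ s.map (fun a => Sum.inr (Sum.inr a)) : List (PL α)) = ((w.map Sum.inl ++ s.map (fun a => Sum.inr (Sum.inr a)) : List (PLS α))) from rfl, toSyncW?_def']
  simp only [List.filterMap_append, List.filterMap_map, Function.comp_def, fm_some', fm_none', fm_id']
  by_cases hs : s = [] <;> simp [hs] <;> split_ifs <;> rfl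

lemma toSyncW?_some {l : List (PL α)} {x : SyncW α} (h : toSyncW? l = some x) :
    WF l ∧ x.decode = decodeW l := by
  unfold toSyncW? at h
  dsimp only at h
  split_ifs at h with h1 h2 h3 h4 h5 <;> injection h with h
  · subst h
    refine ⟨⟨_, _, Or.inl h1⟩, ?_⟩
    conv_rhs => rw [h1]
    rw [decodeW_left, h2]
    simp [SyncW.decode]
  · subst h
    refine ⟨⟨_, _, Or.inl h1⟩, ?_⟩
    conv_rhs => rw [h1]
    rw [decodeW_left, h3]
    simp [SyncW.decode]
  · subst h
    refine ⟨⟨_, _, Or.inl h1⟩, ?_⟩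
    conv_rhs => rw [h1]
    rw [decodeW_left]
    simp [SyncW.decode]
  · subst h
    refine ⟨⟨_, _, Or.inr h4⟩, ?_⟩
    conv_rhs => rw [h4]
    rw [decodeW_right, h5]
    simp [SyncW.decode]
  · subst h
    refine ⟨⟨_, _, Or.inr h4⟩, ?_⟩
    conv_rhs => rw [h4]
    rw [decodeW_right]
    simp [SyncW.decode]

end Aux

/-- If a synchronous algebra morphism `φ : Sync(Σ) → A`
recognizes a relation `R` (via the closed subset `Acc`), then its consolidation
`φ₁ : (Σ₂⊥)* → A₁` recognizes `R` viewed as a language over `Σ₂⊥`: the language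
of `R` is the preimage under `φ₁` of (the copy in `A₁` of) `Acc`. -/
theorem consolidation_recognizes (α : Type) [DecidableEq α] (B : SyncAlg)
    (φ : SyncHom (freeSync α) B) (Acc : Set B.A) (R : Set (List α × List α))
    (hrec : RecognizesRel B φ Acc R) :
    langOf R = { l : List (PL α) | ∃ a, consol φ l = some a ∧ a ∈ Acc } := by
  obtain ⟨hcl, hEq⟩ := hrec
  have hmem : ∀ x : SyncW α, x.decode ∈ R ↔ φ.toFun x ∈ Acc := fun x =>
    Set.ext_iff.mp hEq x
  ext l
  change (WF l ∧ decodeW l ∈ R) ↔ ∃ a, consol φ l = some a ∧ a ∈ Acc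
  have hc : ∀ a, consol φ l = some a ↔ ∃ x, toSyncW? l = some x ∧ φ.toFun x = a :=
    fun a => Option.map_eq_some_iff
  simp only [hc]
  constructor
  · rintro ⟨⟨w, s, hl | hl⟩, hR⟩ <;> subst hl
    · refine ⟨φ.toFun (if s = [] then .wll w else if w = [] then .wlb s else .wlllb w s),
        ⟨_, toSyncW?_left w s, rfl⟩, ?_⟩
      refine (hmem (if s = [] then .wll w else if w = [] then .wlb s else .wlllb w s)).mp ?_
      rw [decodeW_left] at hR
      split_ifs with h1 h2 <;> simp_all [SyncW.decode]
    · refine ⟨φ.toFun (if s = [] then .wll w else if w = [] then .wbl s else .wllbl w s),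
        ⟨_, toSyncW?_right w s, rfl⟩, ?_⟩
      refine (hmem (if s = [] then .wll w else if w = [] then .wbl s else .wllbl w s)).mp ?_
      rw [decodeW_right] at hR
      split_ifs with h1 h2 <;> simp_all [SyncW.decode]
  · rintro ⟨a, ⟨x, hx, rfl⟩, hAcc⟩
    obtain ⟨hwf, hdec⟩ := toSyncW?_some hx
    exact ⟨hwf, hdec ▸ (hmem x).mpr hAcc⟩
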